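/- For every polynomial T_m of degree m on ℝ³ there exists a polynomial p_m of degree m such that Δ(r³ p_m) = r T_m, where r(x)=|x|. -/

import Mathlib

open Metric Real

noncomputable section

abbrev E3 := EuclideanSpace ℝ (Fin 3)

/-- The flat Laplacian on ℝ³. -/
noncomputable def lap (f : E3 → ℝ) (x : E3) : ℝ :=
  ∑ i : Fin 3, fderiv ℝ (fun y => fderiv ℝ f y (EuclideanSpace.single i 1)) x
    (EuclideanSpace.single i 1)

/-- Evaluation of a polynomial in three variables at a point of ℝ³. -/
noncomputable def evalP (p : MvPolynomial (Fin 3) ℝ) (x : E3) : ℝ :=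
  MvPolynomial.eval (fun i => x i) p

open MvPolynomial Finsupp

namespace Scratch

variable {σ : Type*} [DecidableEq σ]

lemma coeff_pderiv (i : σ) (q : MvPolynomial σ ℝ) (t : σ →₀ ℕ) :
    coeff t (pderiv i q) = (t i + 1 : ℝ) * coeff (t + Finsupp.single i 1) q := by
  induction q using MvPolynomial.induction_on' with
  | monomial s a =>
    rw [pderiv_monomial]
    rw [coeff_monomial, coeff_monomial]
    by_cases h : s i = 0
    · have h1 : s - Finsupp.single i 1 = s := by
        ext j; rcases eq_or_ne j i with rfl | hj
        · simp [h]
        · simp [Finsupp.single_apply, (Ne.symm hj : i ≠ j)]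
      have h2 : s ≠ t + Finsupp.single i 1 := by
        intro hs; apply absurd h; rw [hs]; simp
      rw [h1, if_neg h2, mul_zero]
      by_cases hst : s = t
      · subst hst; rw [if_pos rfl]; rw [h]; simp
      · rw [if_neg hst]
    · have key : s - Finsupp.single i 1 = t ↔ s = t + Finsupp.single i 1 := by
        constructor
        · intro hs; ext j
          have hj := congrArg (fun f => f j) hs
          rcases eq_or_ne i j with rfl | hij
          · simp only [Finsupp.tsub_apply, Finsupp.add_apply, Finsupp.single_eq_same] at hj ⊢
            omega
          · simp only [Finsupp.tsub_apply, Finsupp.add_apply,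
              Finsupp.single_eq_of_ne' hij] at hj ⊢
            omega
        · intro hs; rw [hs]; ext j
          rcases eq_or_ne i j with rfl | hij
          · simp only [Finsupp.tsub_apply, Finsupp.add_apply, Finsupp.single_eq_same]
            omega
          · simp only [Finsupp.tsub_apply, Finsupp.add_apply, Finsupp.single_eq_of_ne' hij]
            omega
      by_cases hst : s = t + Finsupp.single i 1
      · rw [if_pos (key.2 hst), if_pos hst]
        have hsi : s i = t i + 1 := by rw [hst]; simp
        rw [hsi]; push_cast; ring
      · rw [if_neg (fun hc => hst (key.1 hc)), if_neg hst, mul_zero]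
  | add p q hp hq => simp [hp, hq]; ring

end Scratch


namespace Alg

open MvPolynomial Finsupp Scratch

variable {sg : Type*} [DecidableEq sg]

def wt (s : sg →₀ ℕ) : ℝ := ((s.prod fun _ n => Nat.factorial n) : ℕ)

lemma wt_pos (s : sg →₀ ℕ) : 0 < wt s := by
  unfold wt
  have h : 0 < s.prod fun _ n => Nat.factorial n :=
    Finset.prod_pos fun i _ => Nat.factorial_pos _
  exact_mod_cast h

lemma wt_add_single (t : sg →₀ ℕ) (i : sg) :
    wt (t + Finsupp.single i 1) = ((t i : ℝ) + 1) * wt t := by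
  classical
  unfold wt
  set S := insert i t.support with hS
  have hsub1 : (t + Finsupp.single i 1).support ⊆ S := by
    intro j hj
    rcases eq_or_ne j i with rfl | hji
    · exact Finset.mem_insert_self _ _
    · apply Finset.mem_insert_of_mem
      rw [Finsupp.mem_support_iff] at hj ⊢
      simpa [Finsupp.single_eq_of_ne' (Ne.symm hji)] using hj
  have hsub2 : t.support ⊆ S := Finset.subset_insert _ _
  rw [Finsupp.prod_of_support_subset _ hsub1 _ (fun _ _ => Nat.factorial_zero),
      Finsupp.prod_of_support_subset _ hsub2 _ (fun _ _ => Nat.factorial_zero)]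
  have hiS : i ∈ S := Finset.mem_insert_self _ _
  rw [← Finset.mul_prod_erase S _ hiS, ← Finset.mul_prod_erase S (fun j => Nat.factorial (t j)) hiS]
  have herase : ∏ j ∈ S.erase i, Nat.factorial ((t + Finsupp.single i 1 : sg →₀ ℕ) j) = ∏ j ∈ S.erase i, Nat.factorial (t j) := by
    apply Finset.prod_congr rfl
    intro j hj
    have hji : j ≠ i := Finset.ne_of_mem_erase hj
    rw [Finsupp.add_apply, Finsupp.single_eq_of_ne' (Ne.symm hji), add_zero]
  rw [herase]
  have hti : (t + Finsupp.single i 1 : sg →₀ ℕ) i = t i + 1 := by simp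
  rw [hti, Nat.factorial_succ]
  push_cast
  ring

def B (p q : MvPolynomial sg ℝ) : ℝ := ∑ s ∈ p.support, coeff s p * coeff s q * wt s

lemma B_eq_sum {p q : MvPolynomial sg ℝ} {T : Finset (sg →₀ ℕ)} (h : p.support ⊆ T) :
    B p q = ∑ s ∈ T, coeff s p * coeff s q * wt s := by
  apply Finset.sum_subset h
  intro s _ hs
  rw [MvPolynomial.notMem_support_iff] at hs
  rw [hs]; ring

lemma B_add_left (p₁ p₂ q : MvPolynomial sg ℝ) : B (p₁ + p₂) q = B p₁ q + B p₂ q := by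
  classical
  have h : (p₁ + p₂).support ⊆ p₁.support ∪ p₂.support := MvPolynomial.support_add
  rw [B_eq_sum h, B_eq_sum (Finset.subset_union_left (s₂ := p₂.support)),
      B_eq_sum (Finset.subset_union_right (s₁ := p₁.support)), ← Finset.sum_add_distrib]
  apply Finset.sum_congr rfl
  intro s _
  rw [coeff_add]; ring

lemma B_zero_left (q : MvPolynomial sg ℝ) : B 0 q = 0 := by simp [B]

lemma B_sum_left {ι : Type*} (f : ι → MvPolynomial sg ℝ) (q : MvPolynomial sg ℝ)
    (I : Finset ι) : B (∑ i ∈ I, f i) q = ∑ i ∈ I, B (f i) q := by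
  classical
  induction I using Finset.induction_on with
  | empty => simp [B_zero_left]
  | insert _ _ hni ih => rw [Finset.sum_insert hni, Finset.sum_insert hni, B_add_left, ih]

lemma B_C_mul_left (c : ℝ) (p q : MvPolynomial sg ℝ) : B (C c * p) q = c * B p q := by
  classical
  have h : (C c * p).support ⊆ p.support := by
    intro s hs
    rw [MvPolynomial.mem_support_iff] at hs ⊢
    intro h0
    rw [coeff_C_mul, h0, mul_zero] at hs
    exact hs rfl
  rw [B_eq_sum h, B, Finset.mul_sum]
  apply Finset.sum_congr rfl
  intro s _
  rw [coeff_C_mul]; ring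

lemma B_add_right (p q₁ q₂ : MvPolynomial sg ℝ) : B p (q₁ + q₂) = B p q₁ + B p q₂ := by
  unfold B
  rw [← Finset.sum_add_distrib]
  apply Finset.sum_congr rfl
  intro s _
  rw [coeff_add]; ring

lemma B_zero_right (p : MvPolynomial sg ℝ) : B p 0 = 0 := by simp [B]

lemma B_sum_right {ι : Type*} (p : MvPolynomial sg ℝ) (f : ι → MvPolynomial sg ℝ)
    (I : Finset ι) : B p (∑ i ∈ I, f i) = ∑ i ∈ I, B p (f i) := by
  classical
  induction I using Finset.induction_on with
  | empty => simp [B_zero_right]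
  | insert _ _ hni ih => rw [Finset.sum_insert hni, Finset.sum_insert hni, B_add_right, ih]

lemma B_mul_X_left (p q : MvPolynomial sg ℝ) (i : sg) :
    B (p * X i) q = B p (pderiv i q) := by
  unfold B
  rw [support_mul_X, Finset.sum_map]
  apply Finset.sum_congr rfl
  intro s _
  have h1 : (addRightEmbedding (Finsupp.single i 1)) s = s + Finsupp.single i 1 := rfl
  rw [h1, coeff_mul_X, Scratch.coeff_pderiv, wt_add_single]
  ring

lemma B_self_nonneg (p : MvPolynomial sg ℝ) : 0 ≤ B p p := by
  apply Finset.sum_nonneg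
  intro s _
  have := wt_pos (sg := sg) s
  nlinarith [sq_nonneg (coeff s p)]

lemma B_self_pos {p : MvPolynomial sg ℝ} (hp : p ≠ 0) : 0 < B p p := by
  obtain ⟨s, hs⟩ : ∃ s, s ∈ p.support := by
    by_contra h
    push_neg at h
    exact hp (MvPolynomial.support_eq_empty.mp (Finset.eq_empty_of_forall_notMem h))
  apply Finset.sum_pos' (fun t _ => by nlinarith [wt_pos (sg := sg) t, sq_nonneg (coeff t p)])
  refine ⟨s, hs, ?_⟩
  have hc : coeff s p ≠ 0 := MvPolynomial.mem_support_iff.mp hs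
  exact mul_pos (mul_self_pos.mpr hc) (wt_pos s)

end Alg

namespace Alg2

open MvPolynomial Finsupp Scratch Alg

variable {sg : Type*} [DecidableEq sg] [Fintype sg]

/-- The operator p ↦ 12 p + 6 ∑ xᵢ ∂ᵢ p + (∑ xⱼ²) Δp, arranged with X's on the right. -/
def Lop (p : MvPolynomial sg ℝ) : MvPolynomial sg ℝ :=
  C 12 * p + C 6 * (∑ i, pderiv i p * X i)
    + ∑ j, ((∑ i, pderiv i (pderiv i p)) * X j) * X j

lemma Lop_add (p q : MvPolynomial sg ℝ) : Lop (p + q) = Lop p + Lop q := by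
  simp only [Lop, map_add, add_mul, mul_add, Finset.sum_add_distrib]
  ring

lemma Lop_smul (c : ℝ) (p : MvPolynomial sg ℝ) : Lop (c • p) = c • Lop p := by
  simp only [Lop, map_smul, Derivation.map_smul, smul_mul_assoc, mul_smul_comm, ← Finset.smul_sum, ← smul_add]

lemma B_Lop_self (p : MvPolynomial sg ℝ) :
    B (Lop p) p = 12 * B p p + 6 * ∑ i, B (pderiv i p) (pderiv i p)
      + B (∑ i, pderiv i (pderiv i p)) (∑ i, pderiv i (pderiv i p)) := by
  rw [Lop, B_add_left, B_add_left, B_C_mul_left, B_C_mul_left, B_sum_left, B_sum_left]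
  congr 1
  · congr 2
    apply Finset.sum_congr rfl
    intro i _
    rw [B_mul_X_left]
  · have h1 : ∀ j : sg, B (((∑ i, pderiv i (pderiv i p)) * X j) * X j) p
        = B (∑ i, pderiv i (pderiv i p)) (pderiv j (pderiv j p)) := by
      intro j
      rw [B_mul_X_left, B_mul_X_left]
    rw [Finset.sum_congr rfl (fun j _ => h1 j), ← B_sum_right]

lemma Lop_inj {p : MvPolynomial sg ℝ} (h : Lop p = 0) : p = 0 := by
  by_contra hp
  have h1 : B (Lop p) p = 0 := by rw [h, B_zero_left]
  rw [B_Lop_self] at h1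
  have h2 : 0 < B p p := B_self_pos hp
  have h3 : 0 ≤ ∑ i, B (pderiv i p) (pderiv i p) :=
    Finset.sum_nonneg fun i _ => B_self_nonneg _
  have h4 : 0 ≤ B (∑ i, pderiv i (pderiv i p)) (∑ i, pderiv i (pderiv i p)) :=
    B_self_nonneg _
  linarith

lemma support_mul_X_mem {p : MvPolynomial sg ℝ} {i : sg} {t : sg →₀ ℕ}
    (ht : t ∈ (p * X i).support) : ∃ s ∈ p.support, t = s + Finsupp.single i 1 := by
  rw [support_mul_X, Finset.mem_map] at ht
  obtain ⟨s, hs, rfl⟩ := ht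
  exact ⟨s, hs, rfl⟩

lemma support_pderiv_mem {p : MvPolynomial sg ℝ} {i : sg} {s : sg →₀ ℕ}
    (hs : s ∈ (pderiv i p).support) : s + Finsupp.single i 1 ∈ p.support := by
  rw [MvPolynomial.mem_support_iff] at hs ⊢
  intro h0
  rw [Scratch.coeff_pderiv, h0, mul_zero] at hs
  exact hs rfl

lemma degsum_add_single (s : sg →₀ ℕ) (i : sg) :
    ((s + Finsupp.single i 1).sum fun _ e => e) = (s.sum fun _ e => e) + 1 := by
  rw [Finsupp.sum_add_index' (fun _ => rfl) (fun _ _ _ => rfl), Finsupp.sum_single_index rfl]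

lemma totalDegree_Lop_le (p : MvPolynomial sg ℝ) : (Lop p).totalDegree ≤ p.totalDegree := by
  refine (totalDegree_add _ _).trans (max_le ((totalDegree_add _ _).trans (max_le ?_ ?_)) ?_)
  · exact (totalDegree_mul _ _).trans (by simpa [totalDegree_C] using le_refl p.totalDegree)
  · refine (totalDegree_mul _ _).trans ?_
    rw [totalDegree_C, zero_add]
    refine (totalDegree_finset_sum _ _).trans (Finset.sup_le fun i _ => ?_)
    apply Finset.sup_le
    intro t ht
    obtain ⟨s, hs, rfl⟩ := support_mul_X_mem ht
    have h2 := support_pderiv_mem hs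
    rw [degsum_add_single]
    calc (s.sum fun _ e => e) + 1
        = ((s + Finsupp.single i 1).sum fun _ e => e) := (degsum_add_single s i).symm
      _ ≤ p.totalDegree := le_totalDegree h2
  · refine (totalDegree_finset_sum _ _).trans (Finset.sup_le fun j _ => ?_)
    apply Finset.sup_le
    intro t ht
    obtain ⟨u, hu, rfl⟩ := support_mul_X_mem ht
    obtain ⟨s, hs, rfl⟩ := support_mul_X_mem hu
    have hex : ∃ i, s ∈ (pderiv i (pderiv i p)).support := by
      by_contra hc
      push_neg at hc
      rw [MvPolynomial.mem_support_iff, MvPolynomial.coeff_sum] at hs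
      exact hs (Finset.sum_eq_zero fun i _ => MvPolynomial.notMem_support_iff.mp (hc i))
    obtain ⟨i, hi⟩ := hex
    have h1 := support_pderiv_mem (support_pderiv_mem hi)
    rw [degsum_add_single, degsum_add_single]
    calc (s.sum fun _ e => e) + 1 + 1
        = ((s + Finsupp.single i 1 + Finsupp.single i 1).sum fun _ e => e) := by
          rw [degsum_add_single, degsum_add_single]
      _ ≤ p.totalDegree := le_totalDegree h1

/-- Surjectivity of Lop on polynomials of degree ≤ m. -/
lemma Lop_surj (m : ℕ) (T : MvPolynomial sg ℝ) (hT : T.totalDegree ≤ m) :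
    ∃ p : MvPolynomial sg ℝ, p.totalDegree ≤ m ∧ Lop p = T := by
  classical
  set V := restrictTotalDegree sg ℝ m with hV
  have hmap : ∀ p ∈ V, Lop p ∈ V := by
    intro p hp
    rw [hV, mem_restrictTotalDegree] at hp
    rw [hV, mem_restrictTotalDegree]
    exact (totalDegree_Lop_le p).trans hp
  let LL : MvPolynomial sg ℝ →ₗ[ℝ] MvPolynomial sg ℝ :=
    { toFun := Lop, map_add' := Lop_add, map_smul' := Lop_smul }
  let Lr : V →ₗ[ℝ] V := LL.restrict hmap
  have hinj : Function.Injective Lr := by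
    rw [← LinearMap.ker_eq_bot, LinearMap.ker_eq_bot']
    intro u hu
    have : Lop (u : MvPolynomial sg ℝ) = 0 := by
      have := congrArg (Subtype.val) hu
      exact this
    ext1
    exact Lop_inj this
  have hsurj : Function.Surjective Lr := (LinearMap.injective_iff_surjective).mp hinj
  obtain ⟨u, hu⟩ := hsurj ⟨T, (mem_restrictTotalDegree sg m T).mpr hT⟩
  refine ⟨(u : MvPolynomial sg ℝ), (mem_restrictTotalDegree sg m _).mp u.2, ?_⟩
  have := congrArg Subtype.val hu
  exact this

end Alg2

namespace Ana

open MvPolynomial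

/-- coordinate projection as a CLM -/
def pr (i : Fin 3) : E3 →L[ℝ] ℝ := PiLp.proj 2 (fun _ : Fin 3 => ℝ) i

lemma pr_apply (i : Fin 3) (y : E3) : pr i y = y i := rfl

/-- gradient CLM of a polynomial -/
def gradC (p : MvPolynomial (Fin 3) ℝ) (x : E3) : E3 →L[ℝ] ℝ :=
  ∑ i, evalP (pderiv i p) x • pr i

lemma gradC_apply (p : MvPolynomial (Fin 3) ℝ) (x v : E3) :
    gradC p x v = ∑ i, evalP (pderiv i p) x * v i := by
  simp [gradC, pr_apply]

lemma hasFDerivAt_evalP (p : MvPolynomial (Fin 3) ℝ) (x : E3) :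
    HasFDerivAt (evalP p) (gradC p x) x := by
  induction p using MvPolynomial.induction_on with
  | C a =>
    have h1 : (evalP (C a) : E3 → ℝ) = fun _ => a := by
      funext y; simp [evalP]
    have h2 : gradC (C a) x = 0 := by
      unfold gradC
      simp [pderiv_C, evalP]
    rw [h1, h2]
    exact hasFDerivAt_const a x
  | add p q hp hq =>
    have h1 : (evalP (p + q) : E3 → ℝ) = fun y => evalP p y + evalP q y := by
      funext y; simp [evalP]
    have h2 : gradC (p + q) x = gradC p x + gradC q x := by
      unfold gradC
      rw [← Finset.sum_add_distrib]
      apply Finset.sum_congr rfl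
      intro i _
      rw [map_add]
      simp only [evalP, map_add, add_smul]
    rw [h1, h2]
    exact hp.add hq
  | mul_X p i hp =>
    have h1 : (evalP (p * X i) : E3 → ℝ) = fun y => evalP p y * y i := by
      funext y; simp [evalP]
    have hXi : HasFDerivAt (fun y : E3 => y i) (pr i) x := (pr i).hasFDerivAt
    have h2 := hp.mul hXi
    rw [h1]
    refine HasFDerivAt.congr_fderiv h2 (Eq.symm ?_)
    ext v
    simp only [gradC, ContinuousLinearMap.add_apply, ContinuousLinearMap.smul_apply,
      ContinuousLinearMap.coe_sum', Finset.sum_apply, pr_apply, smul_eq_mul]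
    have key : ∀ j : Fin 3, evalP (pderiv j (p * X i)) x * v j
        = evalP (pderiv j p) x * x i * v j
          + evalP p x * ((if i = j then (1:ℝ) else 0) * v j) := by
      intro j
      rcases eq_or_ne i j with rfl | hij
      · rw [pderiv_mul, pderiv_X_self]
        simp [evalP]
        ring
      · rw [pderiv_mul, pderiv_X_of_ne hij]
        simp [evalP, hij]
    rw [Finset.sum_congr rfl fun j _ => key j, Finset.sum_add_distrib, add_comm]
    congr 1
    · have h3 : ∀ j : Fin 3, evalP p x * ((if i = j then (1:ℝ) else 0) * v j)
          = if i = j then evalP p x * v j else 0 := by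
        intro j; by_cases h : i = j <;> simp [h]
      rw [Finset.sum_congr rfl fun j _ => h3 j, Finset.sum_ite_eq]
      simp
    · rw [Finset.mul_sum]
      apply Finset.sum_congr rfl
      intro j _
      ring

lemma evalP_cont (p : MvPolynomial (Fin 3) ℝ) : Continuous (evalP p) :=
  continuous_iff_continuousAt.mpr fun x => (hasFDerivAt_evalP p x).differentiableAt.continuousAt

def gfun (y : E3) : ℝ := ∑ j, y j ^ 2

lemma gfun_nonneg (y : E3) : 0 ≤ gfun y :=
  Finset.sum_nonneg fun j _ => sq_nonneg _

lemma norm_eq_sqrt_g (y : E3) : ‖y‖ = Real.sqrt (gfun y) := by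
  rw [EuclideanSpace.norm_eq]
  congr 1
  apply Finset.sum_congr rfl
  intro j _
  rw [Real.norm_eq_abs, sq_abs]

lemma gfun_eq_norm_sq (y : E3) : gfun y = ‖y‖ ^ 2 := by
  rw [norm_eq_sqrt_g, Real.sq_sqrt (gfun_nonneg y)]

def gderiv (x : E3) : E3 →L[ℝ] ℝ := ∑ j, (2 * x j) • pr j

lemma hasFDerivAt_gfun (x : E3) : HasFDerivAt gfun (gderiv x) x := by
  have h : ∀ j : Fin 3, HasFDerivAt (fun y : E3 => y j ^ 2) ((2 * x j) • pr j) x := by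
    intro j
    have hXj : HasFDerivAt (fun y : E3 => y j) (pr j) x := (pr j).hasFDerivAt
    have := hXj.mul hXj
    have heq : (fun y : E3 => y j * y j) = fun y : E3 => y j ^ 2 := by
      funext y; ring
    rw [show ((fun y : E3 => y j) * fun y : E3 => y j) = fun y : E3 => y j ^ 2 from heq] at this
    refine HasFDerivAt.congr_fderiv this (Eq.symm ?_)
    ext v
    simp [pr_apply, two_mul]
    ring
  exact HasFDerivAt.fun_sum (fun j _ => h j)

def nderiv (x : E3) : E3 →L[ℝ] ℝ := (1 / (2 * ‖x‖)) • gderiv x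

lemma hasFDerivAt_norm' {x : E3} (hx : x ≠ 0) :
    HasFDerivAt (fun y : E3 => ‖y‖) (nderiv x) x := by
  have hgx : gfun x ≠ 0 := by
    rw [gfun_eq_norm_sq]
    exact pow_ne_zero _ (norm_ne_zero_iff.mpr hx)
  have h := (hasFDerivAt_gfun x).sqrt hgx
  have heq : (fun y : E3 => Real.sqrt (gfun y)) = fun y : E3 => ‖y‖ := by
    funext y; rw [norm_eq_sqrt_g]
  rw [heq] at h
  refine HasFDerivAt.congr_fderiv h (Eq.symm ?_)
  unfold nderiv
  rw [norm_eq_sqrt_g]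


lemma pr_single (i : Fin 3) : pr i (EuclideanSpace.single i (1:ℝ)) = 1 := by
  rw [pr_apply, EuclideanSpace.single_apply, if_pos rfl]

lemma gradC_single (q : MvPolynomial (Fin 3) ℝ) (x : E3) (i : Fin 3) :
    gradC q x (EuclideanSpace.single i (1:ℝ)) = evalP (pderiv i q) x := by
  rw [gradC]
  simp only [ContinuousLinearMap.coe_sum', Finset.sum_apply, ContinuousLinearMap.smul_apply,
    pr_apply, EuclideanSpace.single_apply, smul_eq_mul, mul_ite, mul_one, mul_zero]
  rw [Finset.sum_ite_eq', if_pos (Finset.mem_univ i)]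

lemma gderiv_single (x : E3) (i : Fin 3) :
    gderiv x (EuclideanSpace.single i (1:ℝ)) = 2 * x i := by
  rw [gderiv]
  simp only [ContinuousLinearMap.coe_sum', Finset.sum_apply, ContinuousLinearMap.smul_apply,
    pr_apply, EuclideanSpace.single_apply, smul_eq_mul, mul_ite, mul_one, mul_zero]
  rw [Finset.sum_ite_eq', if_pos (Finset.mem_univ i)]

lemma nderiv_single (x : E3) (i : Fin 3) :
    nderiv x (EuclideanSpace.single i (1:ℝ)) = (1 / (2 * ‖x‖)) * (2 * x i) := by
  rw [nderiv, ContinuousLinearMap.smul_apply, gderiv_single, smul_eq_mul]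

lemma abs_coord_le (y : E3) (i : Fin 3) : |y i| ≤ ‖y‖ := by
  rw [norm_eq_sqrt_g, ← Real.sqrt_sq_eq_abs]
  apply Real.sqrt_le_sqrt
  exact Finset.single_le_sum (f := fun j => y j ^ 2) (fun j _ => sq_nonneg _)
    (Finset.mem_univ i)

lemma hasFDerivAt_zero_of_bound {F : E3 → ℝ} (hF0 : F 0 = 0) {C : ℝ} (hC : 0 ≤ C)
    (hF : ∀ᶠ y in nhds (0 : E3), |F y| ≤ C * ‖y‖ ^ 2) :
    HasFDerivAt F (0 : E3 →L[ℝ] ℝ) 0 := by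
  rw [hasFDerivAt_iff_isLittleO_nhds_zero]
  have heq : (fun h : E3 => F (0 + h) - F 0 - (0 : E3 →L[ℝ] ℝ) h) = fun h => F h := by
    funext h
    simp [hF0]
  rw [heq]
  rw [Asymptotics.isLittleO_iff]
  intro c hc
  have hC1 : (0:ℝ) < C + 1 := by linarith
  have hr : (0:ℝ) < c / (C + 1) := by positivity
  filter_upwards [hF, Metric.closedBall_mem_nhds (0 : E3) hr] with y hy hy2
  rw [Metric.mem_closedBall, dist_zero_right] at hy2
  have h1 : C * (c / (C + 1)) ≤ c := by
    rw [mul_comm, div_mul_eq_mul_div, div_le_iff₀ hC1]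
    nlinarith
  have h2 : C * ‖y‖ ≤ C * (c / (C + 1)) := mul_le_mul_of_nonneg_left hy2 hC
  have h3 : C * ‖y‖ * ‖y‖ ≤ C * (c / (C + 1)) * ‖y‖ :=
    mul_le_mul_of_nonneg_right h2 (norm_nonneg y)
  have h4 : C * (c / (C + 1)) * ‖y‖ ≤ c * ‖y‖ :=
    mul_le_mul_of_nonneg_right h1 (norm_nonneg y)
  calc |F y| ≤ C * ‖y‖ ^ 2 := hy
    _ ≤ c * ‖y‖ := by nlinarith [norm_nonneg y]
  -- note: abs ‖y‖ fix below if needed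

/-- A bound for a polynomial near 0. -/
lemma poly_bound (q : MvPolynomial (Fin 3) ℝ) :
    ∃ C : ℝ, 0 ≤ C ∧ ∀ y : E3, ‖y‖ ≤ 1 → |evalP q y| ≤ C := by
  obtain ⟨C, hC⟩ := (isCompact_closedBall (0:E3) 1).exists_bound_of_continuousOn
    (evalP_cont q).continuousOn
  refine ⟨max C 0, le_max_right _ _, fun y hy => ?_⟩
  have := hC y (by rwa [Metric.mem_closedBall, dist_zero_right])
  rw [Real.norm_eq_abs] at this
  exact this.trans (le_max_left _ _)

/-- the function Df p i y = ∂ᵢ(r³ P)(y). -/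
def Df (p : MvPolynomial (Fin 3) ℝ) (i : Fin 3) (y : E3) : ℝ :=
  3 * (‖y‖ * (y i * evalP p y)) + gfun y * ‖y‖ * evalP (pderiv i p) y

lemma hasFDerivAt_f0 (p : MvPolynomial (Fin 3) ℝ) :
    HasFDerivAt (fun y : E3 => ‖y‖ ^ 3 * evalP p y) (0 : E3 →L[ℝ] ℝ) 0 := by
  obtain ⟨C, hC0, hC⟩ := poly_bound p
  apply hasFDerivAt_zero_of_bound (by simp) hC0
  filter_upwards [Metric.ball_mem_nhds (0 : E3) one_pos] with y hy
  rw [Metric.mem_ball, dist_zero_right] at hy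
  have h1 := hC y hy.le
  rw [abs_mul, abs_pow, abs_norm]
  have hn := norm_nonneg y
  have h6 : ‖y‖ ^ 3 ≤ ‖y‖ ^ 2 := pow_le_pow_of_le_one hn hy.le (by norm_num)
  calc ‖y‖ ^ 3 * |evalP p y| ≤ ‖y‖ ^ 2 * C :=
        mul_le_mul h6 h1 (abs_nonneg _) (pow_nonneg hn 2)
    _ = C * ‖y‖ ^ 2 := by ring

lemma hasFDerivAt_Df0 (p : MvPolynomial (Fin 3) ℝ) (i : Fin 3) :
    HasFDerivAt (Df p i) (0 : E3 →L[ℝ] ℝ) 0 := by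
  obtain ⟨C, hC0, hC⟩ := poly_bound p
  obtain ⟨D, hD0, hD⟩ := poly_bound (pderiv i p)
  apply hasFDerivAt_zero_of_bound (by simp [Df, gfun]) (by positivity : (0:ℝ) ≤ 3 * C + D)
  filter_upwards [Metric.ball_mem_nhds (0 : E3) one_pos] with y hy
  rw [Metric.mem_ball, dist_zero_right] at hy
  have h1 := hC y hy.le
  have h2 := hD y hy.le
  have h3 := abs_coord_le y i
  have h4 : gfun y = ‖y‖ ^ 2 := gfun_eq_norm_sq y
  rw [Df, h4]
  have hn := norm_nonneg y
  calc |3 * (‖y‖ * (y i * evalP p y)) + ‖y‖ ^ 2 * ‖y‖ * evalP (pderiv i p) y|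
      ≤ |3 * (‖y‖ * (y i * evalP p y))| + |‖y‖ ^ 2 * ‖y‖ * evalP (pderiv i p) y| :=
        abs_add_le _ _
    _ ≤ 3 * C * ‖y‖ ^ 2 + D * ‖y‖ ^ 2 := by
        rw [abs_mul, abs_mul, abs_mul, abs_mul, abs_mul]
        rw [abs_norm, abs_pow, abs_norm]
        have h30 : |(3:ℝ)| = 3 := by norm_num
        rw [h30]
        have h6 : ‖y‖ ^ 3 ≤ ‖y‖ ^ 2 := pow_le_pow_of_le_one hn hy.le (by norm_num)
        have h7 : |y i| * |evalP p y| ≤ ‖y‖ * C :=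
          mul_le_mul h3 h1 (abs_nonneg _) hn
        have h8 : ‖y‖ * (|y i| * |evalP p y|) ≤ ‖y‖ ^ 2 * C := by nlinarith
        have h9 : ‖y‖ ^ 2 * ‖y‖ * |evalP ((pderiv i) p) y| ≤ ‖y‖ ^ 2 * D := by
          have : ‖y‖ ^ 2 * ‖y‖ = ‖y‖ ^ 3 := by ring
          rw [this]
          exact mul_le_mul h6 h2 (abs_nonneg _) (pow_nonneg hn 2)
        linarith
    _ = (3 * C + D) * ‖y‖ ^ 2 := by ring


lemma hasFDerivAt_f {x : E3} (hx : x ≠ 0) (p : MvPolynomial (Fin 3) ℝ) :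
    HasFDerivAt (fun y : E3 => ‖y‖ ^ 3 * evalP p y)
      (gfun x • (‖x‖ • gradC p x + evalP p x • nderiv x)
        + (‖x‖ * evalP p x) • gderiv x) x := by
  have heq : (fun y : E3 => ‖y‖ ^ 3 * evalP p y)
      = fun y : E3 => gfun y * (‖y‖ * evalP p y) := by
    funext y
    rw [gfun_eq_norm_sq]
    ring
  rw [heq]
  exact (hasFDerivAt_gfun x).mul ((hasFDerivAt_norm' hx).mul (hasFDerivAt_evalP p x))

lemma fderiv_f_single (p : MvPolynomial (Fin 3) ℝ) (i : Fin 3) (y : E3) :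
    fderiv ℝ (fun z : E3 => ‖z‖ ^ 3 * evalP p z) y (EuclideanSpace.single i 1)
      = Df p i y := by
  rcases eq_or_ne y 0 with rfl | hy
  · rw [(hasFDerivAt_f0 p).fderiv]
    simp [Df, gfun]
  · rw [(hasFDerivAt_f hy p).fderiv]
    simp only [ContinuousLinearMap.add_apply, ContinuousLinearMap.smul_apply, smul_eq_mul,
      gradC_single, nderiv_single, gderiv_single]
    rw [Df, gfun_eq_norm_sq]
    have hn : ‖y‖ ≠ 0 := norm_ne_zero_iff.mpr hy
    field_simp
    ring

lemma hasFDerivAt_Df {x : E3} (hx : x ≠ 0) (p : MvPolynomial (Fin 3) ℝ) (i : Fin 3) :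
    HasFDerivAt (Df p i)
      ((3:ℝ) • (‖x‖ • (x i • gradC p x + evalP p x • pr i)
          + (x i * evalP p x) • nderiv x)
        + ((gfun x * ‖x‖) • gradC (pderiv i p) x
          + evalP (pderiv i p) x • (gfun x • nderiv x + ‖x‖ • gderiv x))) x := by
  have h1 := (hasFDerivAt_norm' hx).mul ((pr i).hasFDerivAt.mul (hasFDerivAt_evalP p x))
  have h2 := ((hasFDerivAt_gfun x).mul (hasFDerivAt_norm' hx)).mul
    (hasFDerivAt_evalP (pderiv i p) x)
  have h3 := (h1.const_mul (3:ℝ)).add h2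
  exact h3

lemma fderiv_Df_single {x : E3} (hx : x ≠ 0) (p : MvPolynomial (Fin 3) ℝ) (i : Fin 3) :
    fderiv ℝ (Df p i) x (EuclideanSpace.single i 1)
      = 6 * ‖x‖ * (x i * evalP (pderiv i p) x) + 3 * ‖x‖ * evalP p x
        + (3 * evalP p x / ‖x‖) * x i ^ 2
        + ‖x‖ ^ 3 * evalP (pderiv i (pderiv i p)) x := by
  rw [(hasFDerivAt_Df hx p i).fderiv]
  have hn : ‖x‖ ≠ 0 := norm_ne_zero_iff.mpr hx
  simp only [ContinuousLinearMap.add_apply, ContinuousLinearMap.smul_apply, smul_eq_mul,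
    gradC_single, nderiv_single, gderiv_single, pr_single]
  rw [gfun_eq_norm_sq]
  field_simp
  ring

lemma lap_f (p : MvPolynomial (Fin 3) ℝ) (x : E3) :
    lap (fun y : E3 => ‖y‖ ^ 3 * evalP p y) x
      = ‖x‖ * (12 * evalP p x + 6 * ∑ i, x i * evalP (MvPolynomial.pderiv i p) x
          + ‖x‖ ^ 2 * ∑ i, evalP (MvPolynomial.pderiv i (MvPolynomial.pderiv i p)) x) := by
  unfold lap
  have hrw : ∀ i : Fin 3,
      (fun y : E3 => fderiv ℝ (fun z : E3 => ‖z‖ ^ 3 * evalP p z) y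
        (EuclideanSpace.single i 1)) = Df p i :=
    fun i => funext (fderiv_f_single p i)
  rw [Finset.sum_congr rfl (fun i _ => by rw [hrw i])]
  rcases eq_or_ne x 0 with rfl | hx
  · have h0 : ∀ i : Fin 3, fderiv ℝ (Df p i) 0 (EuclideanSpace.single i 1) = 0 := by
      intro i
      rw [(hasFDerivAt_Df0 p i).fderiv]
      rfl
    rw [Finset.sum_congr rfl (fun i _ => h0 i)]
    simp
  · rw [Finset.sum_congr rfl (fun i _ => fderiv_Df_single hx p i)]
    have hn : ‖x‖ ≠ 0 := norm_ne_zero_iff.mpr hx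
    have hsq : ∑ i : Fin 3, x i ^ 2 = ‖x‖ ^ 2 := by
      have := gfun_eq_norm_sq x
      rwa [gfun] at this
    rw [Finset.sum_add_distrib, Finset.sum_add_distrib, Finset.sum_add_distrib,
      Finset.sum_const]
    simp only [Finset.card_univ, Fintype.card_fin, nsmul_eq_mul]
    rw [← Finset.mul_sum, ← Finset.mul_sum, ← Finset.mul_sum, hsq]
    field_simp
    ring

end Ana

/-- For every polynomial T_m of degree m on ℝ³ there is a polynomial p_m of degree m
such that Δ(r³ p_m) = r T_m, where r(x) = |x|. -/
theorem stmt5 (m : ℕ) (T : MvPolynomial (Fin 3) ℝ) (hT : T.totalDegree ≤ m) :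
    ∃ p : MvPolynomial (Fin 3) ℝ, p.totalDegree ≤ m ∧
      ∀ x : E3, lap (fun y => ‖y‖ ^ 3 * evalP p y) x = ‖x‖ * evalP T x := by
  obtain ⟨p, hdeg, hLp⟩ := Alg2.Lop_surj m T hT
  refine ⟨p, hdeg, fun x => ?_⟩
  rw [Ana.lap_f, ← hLp]
  congr 1
  rw [Alg2.Lop]
  simp only [evalP, map_add, map_mul, map_sum, MvPolynomial.eval_C, MvPolynomial.eval_X]
  have hsq : ∑ j : Fin 3, x j ^ 2 = ‖x‖ ^ 2 := by
    have := Ana.gfun_eq_norm_sq x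
    rwa [Ana.gfun] at this
  rw [← hsq]
  have h1 : ∑ i : Fin 3, x i * (MvPolynomial.eval fun k => x k) (MvPolynomial.pderiv i p)
      = ∑ i : Fin 3, (MvPolynomial.eval fun k => x k) (MvPolynomial.pderiv i p) * x i :=
    Finset.sum_congr rfl fun i _ => mul_comm _ _
  have h2 : (∑ j : Fin 3, x j ^ 2)
        * (∑ i : Fin 3, (MvPolynomial.eval fun k => x k)
            (MvPolynomial.pderiv i (MvPolynomial.pderiv i p)))
      = ∑ j : Fin 3, ((∑ i : Fin 3, (MvPolynomial.eval fun k => x k)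
            (MvPolynomial.pderiv i (MvPolynomial.pderiv i p))) * x j * x j) := by
    rw [Finset.sum_mul]
    apply Finset.sum_congr rfl
    intro j _
    ring
  rw [h1, h2]

end
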